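/- Let F = {F_i : i ∈ ℕ} be a countable family of contractions on a complete metric space with fixed points x_i, and ρ a probability sequence. If μ is an invariant measure for (F,ρ), cl(P) is the smallest invariant set (P the fixed points of finite compositions), and for any ε > 0, any indices i_1,…,i_k, the ε-enlargement P_ε := {y : dist(y, cl(P)) < ε} satisfies μ(P_ε) = μ((F_{i_1} ∘ ⋯ ∘ F_{i_k})⁻¹(P_ε)). -/

import Mathlib

open Metric Set MeasureTheory
open scoped NNReal ENNReal

/-- The set of fixed points of finite (nonempty) compositions of members of the family `F`. -/
def fixedPtsOfComps {X : Type*} (F : ℕ → X → X) : Set X :=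
  {x : X | ∃ l : List ℕ, l ≠ [] ∧ l.foldr (fun i y => F i y) x = x}

/-- A nonempty set `E` is invariant for the family `F` if `E = cl(⋃ i, F i '' E)`. -/
def IsInvariantSet {X : Type*} [TopologicalSpace X] (F : ℕ → X → X) (E : Set X) : Prop :=
  E.Nonempty ∧ E = closure (⋃ i : ℕ, F i '' E)

theorem measure_enlargement_eq_measure_preimage
    {X : Type*} [MetricSpace X] [CompleteSpace X] [MeasurableSpace X] [BorelSpace X]
    (F : ℕ → X → X) (hF : ∀ i, ∃ r : ℝ≥0, ContractingWith r (F i))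
    (x : ℕ → X) (hx : ∀ i, F i (x i) = x i)
    (ρ : ℕ → ℝ≥0) (hρ : ∀ i, 0 < ρ i ∧ ρ i < 1) (hρs : ∑' i, ρ i = 1)
    (μ : Measure X) [IsProbabilityMeasure μ]
    (hinv : μ = Measure.sum (fun i => (ρ i : ℝ≥0∞) • μ.map (F i)))
    (hsmall : IsInvariantSet F (closure (fixedPtsOfComps F)) ∧
      ∀ A : Set X, IsInvariantSet F A → closure (fixedPtsOfComps F) ⊆ A) :
    ∀ ε > (0 : ℝ), ∀ l : List ℕ, l ≠ [] →
      μ (Metric.thickening ε (closure (fixedPtsOfComps F))) =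
        μ ((fun z => l.foldr (fun i y => F i y) z) ⁻¹'
            Metric.thickening ε (closure (fixedPtsOfComps F))) := by
  intro ε hε l _
  set C : Set X := closure (fixedPtsOfComps F) with hCdef
  set P : Set X := Metric.thickening ε C with hPdef
  -- continuity and measurability of the maps
  have hcont : ∀ i, Continuous (F i) := fun i => (hF i).choose_spec.2.continuous
  have hmeas : ∀ i, Measurable (F i) := fun i => (hcont i).measurable
  -- each F i maps C into C
  have hCinv : ∀ i, MapsTo (F i) C C := by
    intro i y hy
    have h1 : F i y ∈ ⋃ j, F j '' C := mem_iUnion.2 ⟨i, mem_image_of_mem _ hy⟩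
    have h2 : (⋃ j, F j '' C) ⊆ closure (⋃ j, F j '' C) := subset_closure
    rw [hsmall.1.2]
    exact h2 h1
  -- each F i maps P into P
  have hPsub : ∀ i, P ⊆ F i ⁻¹' P := by
    intro i y hy
    obtain ⟨r, hr⟩ := hF i
    rcases (Metric.mem_thickening_iff_exists_edist_lt C y).1 hy with ⟨c, hc, hyc⟩
    refine (Metric.mem_thickening_iff_exists_edist_lt C (F i y)).2 ⟨F i c, hCinv i hc, ?_⟩
    calc edist (F i y) (F i c) ≤ r * edist y c := hr.2 y c
      _ ≤ 1 * edist y c := by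
          exact mul_le_mul_left (by exact_mod_cast hr.1.le) _
      _ = edist y c := one_mul _
      _ < ENNReal.ofReal ε := hyc
  have hPmeas : MeasurableSet P := Metric.isOpen_thickening.measurableSet
  -- the invariance identity on measurable sets
  have hsum : ∀ S : Set X, MeasurableSet S →
      μ S = ∑' i, (ρ i : ℝ≥0∞) * μ (F i ⁻¹' S) := by
    intro S hS
    conv_lhs => rw [hinv]
    rw [Measure.sum_apply _ hS]
    congr 1; ext i
    rw [Measure.smul_apply, Measure.map_apply (hmeas i) hS, smul_eq_mul]
  -- summability of ρ
  have hρsummable : Summable ρ := by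
    by_contra h
    rw [tsum_eq_zero_of_not_summable h] at hρs
    exact one_ne_zero hρs.symm
  have hρtsum : (∑' i, (ρ i : ℝ≥0∞)) = 1 := by
    rw [← ENNReal.coe_tsum hρsummable, hρs, ENNReal.coe_one]
  -- null sets pull back to null sets
  have hnull : ∀ (S : Set X), MeasurableSet S → μ S = 0 → ∀ i, μ (F i ⁻¹' S) = 0 := by
    intro S hS h0 i
    have := hsum S hS
    rw [h0] at this
    have hterm := ENNReal.tsum_eq_zero.1 this.symm i
    have hρi : (ρ i : ℝ≥0∞) ≠ 0 := by
      exact_mod_cast (hρ i).1.ne'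
    exact (mul_eq_zero.1 hterm).resolve_left hρi
  have hPfin : μ P ≠ ∞ := measure_ne_top μ P
  -- single-step equality
  have hstep : ∀ i, μ (F i ⁻¹' P) = μ P := by
    intro i
    by_contra hne
    have hlt : μ P < μ (F i ⁻¹' P) :=
      lt_of_le_of_ne (measure_mono (hPsub i)) (Ne.symm hne)
    have h1 : (∑' j, (ρ j : ℝ≥0∞) * μ P) = μ P := by
      rw [ENNReal.tsum_mul_right, hρtsum, one_mul]
    have h2 := hsum P hPmeas
    have hstrict : (∑' j, (ρ j : ℝ≥0∞) * μ P) < ∑' j, (ρ j : ℝ≥0∞) * μ (F j ⁻¹' P) := by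
      refine ENNReal.tsum_lt_tsum (i := i) ?_ ?_ ?_
      · rw [h1]; exact hPfin
      · intro j; exact mul_le_mul_right (measure_mono (hPsub j)) _
      · refine (ENNReal.mul_lt_mul_iff_right ?_ ?_).2 hlt
        · exact_mod_cast (hρ i).1.ne'
        · exact ENNReal.coe_ne_top
    rw [h1, ← h2] at hstrict
    exact lt_irrefl _ hstrict
  -- the null-difference sets
  have hdiff : ∀ i, μ (F i ⁻¹' P \ P) = 0 := by
    intro i
    rw [measure_diff (hPsub i) hPmeas.nullMeasurableSet hPfin, hstep i, tsub_self]
  -- induction over the list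
  have main : ∀ t : List ℕ, μ ((fun z => t.foldr (fun i y => F i y) z) ⁻¹' P) = μ P := by
    intro t
    induction t with
    | nil => simp
    | cons i t ih =>
      have hrw : ((fun z => (i :: t).foldr (fun i y => F i y) z) ⁻¹' P)
          = (fun z => t.foldr (fun i y => F i y) z) ⁻¹' (F i ⁻¹' P) := by
        ext z; simp [List.foldr]
      rw [hrw]
      -- F i ⁻¹' P = P ∪ (F i ⁻¹' P \ P)
      have hsplit : F i ⁻¹' P = P ∪ (F i ⁻¹' P \ P) :=
        (union_diff_cancel (hPsub i)).symm
      -- pullback of the null part along the composition is null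
      have hnullcomp : ∀ (s : List ℕ) (S : Set X), MeasurableSet S → μ S = 0 →
          μ ((fun z => s.foldr (fun i y => F i y) z) ⁻¹' S) = 0 := by
        intro s
        induction s with
        | nil => intro S _ h0; simpa using h0
        | cons j s ihs =>
          intro S hS h0
          have hS' : MeasurableSet (F j ⁻¹' S) := hS.preimage (hmeas j)
          have h0' : μ (F j ⁻¹' S) = 0 := hnull S hS h0 j
          have := ihs (F j ⁻¹' S) hS' h0'
          rw [← this]
          congr 1
      have hNmeas : MeasurableSet (F i ⁻¹' P \ P) :=
        (hPmeas.preimage (hmeas i)).diff hPmeas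
      have hN0 : μ ((fun z => t.foldr (fun i y => F i y) z) ⁻¹' (F i ⁻¹' P \ P)) = 0 :=
        hnullcomp t _ hNmeas (hdiff i)
      have hrw2 : ((fun z => t.foldr (fun i y => F i y) z) ⁻¹' (F i ⁻¹' P))
          = (fun z => t.foldr (fun i y => F i y) z) ⁻¹' P ∪
              (fun z => t.foldr (fun i y => F i y) z) ⁻¹' (F i ⁻¹' P \ P) := by
        conv_lhs => rw [hsplit]
        exact preimage_union
      rw [hrw2]
      refine le_antisymm ?_ (le_trans (le_of_eq ih.symm) (measure_mono subset_union_left))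
      calc μ ((fun z => t.foldr (fun i y => F i y) z) ⁻¹' P ∪
              (fun z => t.foldr (fun i y => F i y) z) ⁻¹' (F i ⁻¹' P \ P))
          ≤ μ ((fun z => t.foldr (fun i y => F i y) z) ⁻¹' P) +
              μ ((fun z => t.foldr (fun i y => F i y) z) ⁻¹' (F i ⁻¹' P \ P)) :=
            measure_union_le _ _
        _ = μ P := by rw [hN0, add_zero, ih]
  exact (main l).symm
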